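/- Let κ be an uncountable regular cardinal with κ^{<κ}=κ. Every κ-σ-set A ⊆ 2^κ is perfectly κ-meagre. -/

import Mathlib

noncomputable section

open Cardinal Set

namespace GenSp

/-- The index set: a canonical type of order type `κ.ord`. -/
abbrev I (κ : Cardinal.{0}) : Type := κ.ord.ToType

variable (κ : Cardinal.{0}) (A : Type)

/-- The generalized space `A^κ`. -/
abbrev Sp : Type := I κ → A

/-- The basic clopen set `[x ↾ ξ]`: all functions agreeing with `x` below `ξ`. -/
def cyl (x : Sp κ A) (ξ : I κ) : Set (Sp κ A) := {y | ∀ β < ξ, y β = x β}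

/-- The bounded topology on `A^κ`, generated by the basic clopen sets. -/
def bt : TopologicalSpace (Sp κ A) :=
  .generateFrom {S | ∃ x ξ, S = cyl κ A x ξ}

/-- Open in the bounded topology. -/
def OpenK (s : Set (Sp κ A)) : Prop := @IsOpen _ (bt κ A) s

/-- Closed in the bounded topology. -/
def ClosedK (s : Set (Sp κ A)) : Prop := @IsClosed _ (bt κ A) s

/-- Nowhere dense in the bounded topology. -/
def NwdK (s : Set (Sp κ A)) : Prop := @IsNowhereDense _ (bt κ A) s

/-- κ-meagre: a union of (at most) κ nowhere dense sets. -/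
def MeagreK (s : Set (Sp κ A)) : Prop :=
  ∃ f : I κ → Set (Sp κ A), (∀ i, NwdK κ A (f i)) ∧ s = ⋃ i, f i

/-- κ-strongly null set. -/
def SNullK (S : Set (Sp κ A)) : Prop :=
  ∀ ξ : I κ → I κ, ∃ a : I κ → Sp κ A, S ⊆ ⋃ α, cyl κ A (a α) (ξ α)

/-- Coordinatewise addition over `ℤ₂` (translation by `x`). -/
def xadd (x y : Sp κ Bool) : Sp κ Bool := fun i => xor (x i) (y i)

/-- The covering number of the κ-meagre ideal. -/
def covM : Cardinal :=
  sInf {c | ∃ 𝒜 : Set (Set (Sp κ A)), #𝒜 = c ∧ (∀ s ∈ 𝒜, MeagreK κ A s) ∧ ⋃₀ 𝒜 = Set.univ}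

/-- The cofinality of the κ-meagre ideal. -/
def cofM : Cardinal :=
  sInf {c | ∃ 𝒜 : Set (Set (Sp κ A)), #𝒜 = c ∧ (∀ s ∈ 𝒜, MeagreK κ A s) ∧
    ∀ t, MeagreK κ A t → ∃ s ∈ 𝒜, t ⊆ s}

/-- κ is weakly compact: uncountable and with the partition property κ → (κ)²₂. -/
def IsWeaklyCompact (κ : Cardinal.{0}) : Prop :=
  ℵ₀ < κ ∧ ∀ c : I κ → I κ → Bool, ∃ H : Set (I κ), #H = κ ∧
    ∃ b : Bool, ∀ i ∈ H, ∀ j ∈ H, i < j → c i j = b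

/-- `S` is κ-meagre relative to `P` (in the subspace topology). -/
def MeagreInK (P S : Set (Sp κ A)) : Prop :=
  ∃ f : I κ → Set P,
    (∀ i, @IsNowhereDense _ (TopologicalSpace.induced Subtype.val (bt κ A)) (f i)) ∧
    {x : P | (x : Sp κ A) ∈ S} = ⋃ i, f i

/-- Perfect set in the bounded topology. -/
def PerfK (P : Set (Sp κ A)) : Prop := @Perfect _ (bt κ A) P

/-- Perfectly κ-meagre set. -/
def PMeagreK (S : Set (Sp κ A)) : Prop := ∀ P, PerfK κ A P → MeagreInK κ A P S

/-- κ-λ-set. -/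
def KLambdaSet (S : Set (Sp κ A)) : Prop :=
  ∀ B ⊆ S, #B ≤ κ → ∃ G : I κ → Set (Sp κ A),
    (∀ i, OpenK κ A (G i)) ∧ (⋂ i, G i) ∩ S = B

/-- κ-σ-set. -/
def KSigmaSet (S : Set (Sp κ A)) : Prop :=
  ∀ F : I κ → Set (Sp κ A), (∀ i, ClosedK κ A (F i)) →
    ∃ G : I κ → Set (Sp κ A), (∀ i, OpenK κ A (G i)) ∧
      S ∩ (⋃ i, F i) = S ∩ (⋂ i, G i)

/-- κ-γ-set: every open (proper) κ-cover contains a κ-γ-subcover of size κ. -/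
def KGammaSet (X : Set (Sp κ A)) : Prop :=
  ∀ 𝒰 : Set (Set (Sp κ A)), (∀ U ∈ 𝒰, OpenK κ A U) → X ∉ 𝒰 →
    (∀ C ⊆ X, #C < κ → ∃ U ∈ 𝒰, C ⊆ U) →
    ∃ U : I κ → Set (Sp κ A), (∀ α, U α ∈ 𝒰) ∧
      X ⊆ ⋃ α, ⋂ β, ⋂ (_ : α < β), U β

/-- A (proper) open cover of `X` of size κ, indexed by `I κ`. -/
def IsOCovSeq (X : Set (Sp κ A)) (U : I κ → Set (Sp κ A)) : Prop :=
  (∀ α, OpenK κ A (U α)) ∧ (∀ α, U α ≠ X) ∧ X ⊆ ⋃ α, U α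

/-- A (proper) κ-γ-cover of `X`, indexed by `I κ`. -/
def IsGammaCovSeq (X : Set (Sp κ A)) (U : I κ → Set (Sp κ A)) : Prop :=
  (∀ α, OpenK κ A (U α)) ∧ (∀ α, U α ≠ X) ∧
    X ⊆ ⋃ α, ⋂ β, ⋂ (_ : α < β), U β

/-- The cover `U` is essentially of size κ: no subfamily of size `< κ` covers `X`. -/
def EssK (X : Set (Sp κ A)) (U : I κ → Set (Sp κ A)) : Prop :=
  ∀ s : Set (I κ), #s < κ → ¬ X ⊆ ⋃ β ∈ s, U β

/-- The selection principle `S₁^κ(Γ_κ, Γ_κ)`. -/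
def S1GammaGamma (X : Set (Sp κ A)) : Prop :=
  ∀ 𝒰 : I κ → I κ → Set (Sp κ A), (∀ α, IsGammaCovSeq κ A X (𝒰 α)) →
    ∃ f : I κ → I κ, IsGammaCovSeq κ A X (fun α => 𝒰 α (f α))

/-- The κ-Hurewicz property `U^κ_{<κ}(O_κ, Γ_κ)`. -/
def KHurewicz (X : Set (Sp κ A)) : Prop :=
  ∀ 𝒰 : I κ → I κ → Set (Sp κ A), (∀ α, IsOCovSeq κ A X (𝒰 α)) →
    (∀ α, EssK κ A X (𝒰 α)) →
    ∃ V : I κ → Set (I κ), (∀ α, #(V α) < κ) ∧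
      IsGammaCovSeq κ A X (fun α => ⋃ β ∈ V α, 𝒰 α β)

/-- The κ-Menger property `U^κ_{<κ}(O_κ, O_κ)`. -/
def KMenger (X : Set (Sp κ A)) : Prop :=
  ∀ 𝒰 : I κ → I κ → Set (Sp κ A), (∀ α, IsOCovSeq κ A X (𝒰 α)) →
    (∀ α, EssK κ A X (𝒰 α)) →
    ∃ V : I κ → Set (I κ), (∀ α, #(V α) < κ) ∧
      IsOCovSeq κ A X (fun α => ⋃ β ∈ V α, 𝒰 α β)

/-- The κ-Rothberger property `S₁^κ(O_κ, O_κ)`. -/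
def KRothberger (X : Set (Sp κ A)) : Prop :=
  ∀ 𝒰 : I κ → I κ → Set (Sp κ A), (∀ α, IsOCovSeq κ A X (𝒰 α)) →
    ∃ f : I κ → I κ, IsOCovSeq κ A X (fun α => 𝒰 α (f α))

/-- Closed unbounded subset of `I κ`. -/
def IsClubK (S : Set (I κ)) : Prop :=
  (∀ a : I κ, ∃ b ∈ S, a < b) ∧
  (∀ a : I κ, (∃ b, b < a) → (∀ b < a, ∃ c ∈ S, b < c ∧ c < a) → a ∈ S)

/-- Stationary subset of `I κ`. -/
def IsStatK (S : Set (I κ)) : Prop :=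
  ∀ C : Set (I κ), IsClubK κ C → (S ∩ C).Nonempty

/-- The diamond principle `◇_κ(E)`. -/
def DiamondK (E : Set (I κ)) : Prop :=
  ∃ s : I κ → Set (I κ), (∀ α, s α ⊆ Iio α) ∧
    ∀ X : Set (I κ), IsStatK κ {α | α ∈ E ∧ X ∩ Iio α = s α}

/-- The guessing principle `◇_κ(E, 2^κ, NS_κ)`. -/
def DiamondFunK (E : Set (I κ)) : Prop :=
  ∃ s : I κ → Sp κ Bool,
    ∀ x : Sp κ Bool, IsStatK κ {α | α ∈ E ∧ ∀ β < α, x β = s α β}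

/-- `S` is `X`-small. -/
def XSmall (X : Set (I κ)) (S : Set (Sp κ A)) : Prop :=
  ∃ a : I κ → Sp κ A, S ⊆ ⋃ α ∈ X, cyl κ A (a α) α

/-- `S` is small in `A^κ`. -/
def SmallK (S : Set (Sp κ A)) : Prop :=
  ∃ lam : Cardinal, lam < κ ∧ ∀ α : I κ, ∃ T : Set (Sp κ A),
    #T ≤ lam ∧ S ⊆ ⋃ x ∈ T, cyl κ A x α



section Aux
variable {κ : Cardinal.{0}} {A : Type}

lemma mem_cyl_self (x : Sp κ A) (ξ : I κ) : x ∈ cyl κ A x ξ := fun _ _ => rfl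

lemma cyl_open (x : Sp κ A) (ξ : I κ) : OpenK κ A (cyl κ A x ξ) :=
  TopologicalSpace.GenerateOpen.basic _ ⟨x, ξ, rfl⟩

lemma cyl_subset {x y : Sp κ A} {ξ ζ : I κ} (hx : x ∈ cyl κ A y ξ) (hξ : ξ ≤ ζ) :
    cyl κ A x ζ ⊆ cyl κ A y ξ := fun z hz β hβ => (hz β (lt_of_lt_of_le hβ hξ)).trans (hx β hβ)

lemma cyl_congr {x y : Sp κ A} {ξ : I κ} (h : ∀ β < ξ, x β = y β) :
    cyl κ A x ξ = cyl κ A y ξ := by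
  ext z
  constructor <;> intro hz β hβ
  · exact (hz β hβ).trans (h β hβ)
  · exact (hz β hβ).trans (h β hβ).symm

lemma nbas (hne : Nonempty (I κ)) {U : Set (Sp κ A)} (hU : OpenK κ A U) :
    ∀ x ∈ U, ∃ ξ, cyl κ A x ξ ⊆ U := by
  have hU' : TopologicalSpace.GenerateOpen {S | ∃ x ξ, S = cyl κ A x ξ} U := hU
  clear hU
  induction hU' with
  | basic S hS =>
      rintro x hx
      obtain ⟨y, ξ, rfl⟩ := hS
      exact ⟨ξ, cyl_subset hx le_rfl⟩
  | univ => exact fun x _ => ⟨hne.some, fun _ _ => trivial⟩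
  | inter s t _ _ ihs iht =>
      rintro x ⟨hxs, hxt⟩
      obtain ⟨ξ, hξ⟩ := ihs x hxs
      obtain ⟨ζ, hζ⟩ := iht x hxt
      refine ⟨max ξ ζ, fun z hz => ⟨hξ fun β hβ => hz β (lt_of_lt_of_le hβ (le_max_left _ _)),
        hζ fun β hβ => hz β (lt_of_lt_of_le hβ (le_max_right _ _))⟩⟩
  | sUnion S hS ih =>
      rintro x ⟨s, hs, hxs⟩
      obtain ⟨ξ, hξ⟩ := ih s hs x hxs
      exact ⟨ξ, hξ.trans (subset_sUnion_of_mem hs)⟩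

lemma singleton_closedK (hk : ℵ₀ ≤ κ) (y : Sp κ A) : ClosedK κ A {y} := by
  letI := bt κ A
  haveI : NoMaxOrder (I κ) :=
    Ordinal.toType_noMax_of_succ_lt (fun a ha => (Cardinal.isSuccLimit_ord hk).succ_lt ha)
  rw [ClosedK, ← isOpen_compl_iff, isOpen_iff_forall_mem_open]
  intro z hz
  obtain ⟨β, hβ⟩ := Function.ne_iff.mp hz
  obtain ⟨ξ, hξ⟩ := exists_gt β
  refine ⟨cyl κ A z ξ, fun w hw hwy => hβ ?_, cyl_open z ξ, mem_cyl_self z ξ⟩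
  rw [← hw β hξ, hwy]

end Aux

theorem stmt11 (κ : Cardinal.{0}) (hk : Cardinal.aleph0 < κ) (hreg : κ.IsRegular) (hpow : κ ^< κ = κ)
    (S : Set (Sp κ Bool)) (hS : KSigmaSet κ Bool S) :
    PMeagreK κ Bool S := by
  classical
  intro P hP
  letI := bt κ Bool
  haveI hIne : Nonempty (I κ) := by
    rw [← Cardinal.mk_ne_zero_iff, Cardinal.mk_ord_toType]
    exact (aleph0_pos.trans hk).ne'
  by_cases hSP : (S ∩ P).Nonempty
  · obtain ⟨p₀, hp₀S, hp₀P⟩ := hSP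
    -- the index type for a dense family
    let T := Σ ξ : I κ, ({β : I κ // β < ξ} → Bool)
    let ex : T → Sp κ Bool := fun t β => if h : β < t.1 then t.2 ⟨β, h⟩ else false
    have key : ∀ t : T, ∃ p : Sp κ Bool, p ∈ S ∧ p ∈ P ∧
        ((cyl κ Bool (ex t) t.1 ∩ (S ∩ P)).Nonempty → p ∈ cyl κ Bool (ex t) t.1) := by
      intro t
      by_cases h : (cyl κ Bool (ex t) t.1 ∩ (S ∩ P)).Nonempty
      · exact ⟨h.choose, h.choose_spec.2.1, h.choose_spec.2.2, fun _ => h.choose_spec.1⟩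
      · exact ⟨p₀, hp₀S, hp₀P, fun hn => absurd hn h⟩
    choose dfun hdfunS hdfunP hdfun_in using key
    -- cardinality of T
    have hTcard : #T ≤ κ := by
      have h1 : #T = Cardinal.sum (fun ξ : I κ => #({β : I κ // β < ξ} → Bool)) :=
        Cardinal.mk_sigma _
      have h2 : ∀ ξ : I κ, #({β : I κ // β < ξ} → Bool) ≤ κ := by
        intro ξ
        have hb : #({β : I κ // β < ξ} → Bool) = (2 : Cardinal) ^ #{β : I κ // β < ξ} := by
          rw [← Cardinal.mk_bool, Cardinal.power_def]
        rw [hb]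
        have hlt : #{β : I κ // β < ξ} < κ := Cardinal.mk_Iio_ord_toType ξ
        calc (2 : Cardinal) ^ #{β : I κ // β < ξ}
            ≤ κ ^ #{β : I κ // β < ξ} :=
              Cardinal.power_le_power_right ((Cardinal.nat_lt_aleph0 2).le.trans hk.le)
          _ ≤ κ ^< κ := Cardinal.le_powerlt κ hlt
          _ = κ := hpow
      calc #T = Cardinal.sum (fun ξ : I κ => #({β : I κ // β < ξ} → Bool)) := h1
        _ ≤ Cardinal.sum (fun _ : I κ => κ) := Cardinal.sum_le_sum _ _ h2
        _ = #(I κ) * κ := Cardinal.sum_const' _ _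
        _ = κ * κ := by rw [Cardinal.mk_ord_toType]
        _ = κ := Cardinal.mul_eq_self hk.le
    -- a surjection from I κ onto T
    obtain ⟨finj⟩ : Nonempty (T ↪ I κ) := by
      rw [← Cardinal.le_def, Cardinal.mk_ord_toType]
      exact hTcard
    haveI hTne : Nonempty T := ⟨⟨hIne.some, fun _ => false⟩⟩
    let g : I κ → T := Function.invFun finj
    have hg : Function.Surjective g := fun t => ⟨finj t, Function.leftInverse_invFun finj.injective t⟩
    obtain ⟨d, hd⟩ : ∃ d : I κ → Sp κ Bool, ∀ α, d α = dfun (g α) := ⟨fun α => dfun (g α), fun _ => rfl⟩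
    have hdS : ∀ α, d α ∈ S := fun α => (hd α) ▸ hdfunS (g α)
    have hdP : ∀ α, d α ∈ P := fun α => (hd α) ▸ hdfunP (g α)
    -- density of d
    have hdense : ∀ (y : Sp κ Bool) (ξ : I κ), (cyl κ Bool y ξ ∩ (S ∩ P)).Nonempty →
        ∃ α, d α ∈ cyl κ Bool y ξ := by
      intro y ξ hne'
      set t : T := ⟨ξ, fun b => y b.1⟩ with ht
      have hcyl : cyl κ Bool (ex t) t.1 = cyl κ Bool y ξ := by
        apply cyl_congr
        intro β hβ
        simp only [ex, ht, dif_pos hβ]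
        exact dif_pos hβ
      obtain ⟨α, hα⟩ := hg t
      refine ⟨α, ?_⟩
      have h2 := hdfun_in t (by rw [hcyl]; exact hne')
      rw [hcyl] at h2
      rw [hd α, hα]
      exact h2
    -- apply the σ-set property to the singletons of d
    obtain ⟨G, hGopen, hGeq⟩ := hS (fun α => {d α}) (fun α => singleton_closedK hk.le (d α))
    have hUeq : (⋃ i, ({d i} : Set (Sp κ Bool))) = range d := by
      ext z; simp [eq_comm]
    rw [hUeq, inter_eq_self_of_subset_right (range_subset_iff.mpr hdS)] at hGeq
    have hDG : ∀ α β, d α ∈ G β := by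
      intro α β
      have : d α ∈ S ∩ ⋂ i, G i := hGeq ▸ mem_range_self α
      exact mem_iInter.mp this.2 β
    -- the decomposition
    let t : I κ → Set P := fun α => {x : P | (x : Sp κ Bool) ∈ S ∧ (x : Sp κ Bool) ∉ G α}
    let sg : I κ → Set P := fun α => {x : P | (x : Sp κ Bool) = d α}
    -- nowhere density of the pieces
    have hnt : ∀ α, IsNowhereDense (t α) := by
      intro α
      rw [IsNowhereDense, eq_empty_iff_forall_notMem]
      intro x hx
      obtain ⟨V, hVsub, hVopen, hxV⟩ := mem_interior.mp hx
      obtain ⟨U, hUopen, hUV⟩ := isOpen_induced_iff.mp hVopen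
      obtain ⟨ξ, hξ⟩ := nbas hIne hUopen (x : Sp κ Bool) (by rw [← hUV] at hxV; exact hxV)
      -- x is in the closure of t α; find a point of the dense family nearby
      have hxcl : x ∈ closure (t α) := hVsub hxV
      have hcylopen : IsOpen (Subtype.val ⁻¹' cyl κ Bool (x : Sp κ Bool) ξ : Set P) :=
        (cyl_open _ ξ).preimage continuous_subtype_val
      obtain ⟨y, hy1, hy2⟩ := mem_closure_iff.mp hxcl _ hcylopen (mem_cyl_self _ ξ)
      obtain ⟨α₀, hα₀⟩ := hdense (x : Sp κ Bool) ξ ⟨(y : Sp κ Bool), hy1, hy2.1, y.2⟩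
      -- the point d α₀ lies in V, hence in the closure of t α, but also in G α
      have hdU : d α₀ ∈ U := hξ hα₀
      have hdV : (⟨d α₀, hdP α₀⟩ : P) ∈ V := by rw [← hUV]; exact hdU
      have hdcl : (⟨d α₀, hdP α₀⟩ : P) ∈ closure (t α) := hVsub hdV
      have hGopen' : IsOpen (Subtype.val ⁻¹' G α : Set P) :=
        (hGopen α).preimage continuous_subtype_val
      obtain ⟨z, hz1, hz2⟩ := mem_closure_iff.mp hdcl _ hGopen' (hDG α₀ α)
      exact hz2.2 hz1
    have hns : ∀ α, IsNowhereDense (sg α) := by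
      intro α
      have hclosed : IsClosed (sg α) :=
        (singleton_closedK hk.le (d α)).preimage continuous_subtype_val
      rw [IsNowhereDense, hclosed.closure_eq, eq_empty_iff_forall_notMem]
      intro x hx
      obtain ⟨V, hVsub, hVopen, hxV⟩ := mem_interior.mp hx
      obtain ⟨U, hUopen, hUV⟩ := isOpen_induced_iff.mp hVopen
      obtain ⟨ξ, hξ⟩ := nbas hIne hUopen (x : Sp κ Bool) (by rw [← hUV] at hxV; exact hxV)
      have hxd : (x : Sp κ Bool) = d α := hVsub hxV
      have hacc := hP.acc (x : Sp κ Bool) x.2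
      rw [accPt_iff_nhds] at hacc
      obtain ⟨y, ⟨hyc, hyP⟩, hyne⟩ := hacc (cyl κ Bool (x : Sp κ Bool) ξ)
        (((cyl_open _ ξ).mem_nhds (mem_cyl_self _ ξ)))
      have hyV : (⟨y, hyP⟩ : P) ∈ V := by rw [← hUV]; exact hξ hyc
      have : y = d α := hVsub hyV
      exact hyne (this.trans hxd.symm)
    -- pair up the two families
    obtain ⟨e⟩ : Nonempty (I κ × Bool ≃ I κ) := by
      rw [← Cardinal.eq]
      have : #(I κ × Bool) = #(I κ) * #Bool := by
        rw [Cardinal.mk_prod, Cardinal.lift_id, Cardinal.lift_id]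
      rw [this, Cardinal.mk_bool, Cardinal.mk_ord_toType]
      exact Cardinal.mul_eq_left hk.le ((Cardinal.nat_lt_aleph0 2).le.trans hk.le) two_ne_zero
    refine ⟨fun i => if (e.symm i).2 then t (e.symm i).1 else sg (e.symm i).1, ?_, ?_⟩
    · intro i
      by_cases hb : (e.symm i).2
      · simpa only [if_pos hb] using hnt (e.symm i).1
      · simpa only [if_neg hb] using hns (e.symm i).1
    · ext x
      simp only [mem_setOf_eq, mem_iUnion]
      constructor
      · intro hxS
        by_cases hx : (x : Sp κ Bool) ∈ ⋂ i, G i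
        · have : (x : Sp κ Bool) ∈ range d := by rw [hGeq]; exact ⟨hxS, hx⟩
          obtain ⟨α, hα⟩ := this
          refine ⟨e (α, false), ?_⟩
          simp only [Equiv.symm_apply_apply, if_neg Bool.false_ne_true]
          exact hα.symm
        · obtain ⟨β, hβ⟩ := by simpa only [mem_iInter, not_forall] using hx
          refine ⟨e (β, true), ?_⟩
          simp only [Equiv.symm_apply_apply, if_pos]
          exact ⟨hxS, hβ⟩
      · rintro ⟨i, hi⟩
        by_cases hb : (e.symm i).2
        · rw [if_pos hb] at hi; exact hi.1
        · rw [if_neg hb] at hi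
          have : (x : Sp κ Bool) = d (e.symm i).1 := hi
          rw [this]; exact hdS _
  · refine ⟨fun _ => (∅ : Set P), fun i => ?_, ?_⟩
    · show interior (closure (∅ : Set P)) = ∅
      rw [closure_empty, interior_empty]
    · ext x
      simp only [mem_setOf_eq, mem_iUnion, mem_empty_iff_false, exists_false, iff_false]
      intro hxS
      exact hSP ⟨x, hxS, x.2⟩


end GenSp
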